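/- Every divisor of degree g(G) on a finite connected loopless multigraph G is equivalent to an effective divisor, where g(G) = |E(G)| − |V(G)| + 1. -/

import Mathlib

open Finset

/-- A finite loopless multigraph on a vertex type `V`, given by a symmetric
edge-multiplicity function with zero diagonal. -/
structure Multigraph (V : Type) [Fintype V] [DecidableEq V] where
  m : V → V → ℕ
  symm : ∀ u v, m u v = m v u
  loopless : ∀ v, m v v = 0

namespace Multigraph

variable {V : Type} [Fintype V] [DecidableEq V] (G : Multigraph V)

/-- The underlying simple graph: adjacent iff joined by at least one edge. -/
def toSimpleGraph : SimpleGraph V where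
  Adj u v := 0 < G.m u v
  symm := by
    refine ⟨fun u v h => ?_⟩
    rw [G.symm v u]
    exact h
  loopless := by
    refine ⟨fun v h => ?_⟩
    rw [G.loopless v] at h
    exact lt_irrefl 0 h

/-- A multigraph is connected if its underlying simple graph is. -/
def Connected : Prop := G.toSimpleGraph.Connected

/-- The valence of a vertex: the number of edges incident to it. -/
def val (v : V) : ℕ := ∑ w, G.m v w

end Multigraph

/-- The degree of a divisor: the sum of its values. -/
def Divisor.deg {V : Type} [Fintype V] (D : V → ℤ) : ℤ := ∑ v, D v

/-- A divisor is effective if all its values are nonnegative. -/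
def Divisor.Effective {V : Type} (D : V → ℤ) : Prop := ∀ v, 0 ≤ D v

namespace Multigraph

variable {V : Type} [Fintype V] [DecidableEq V] (G : Multigraph V)

/-- The result of firing the vertex `v`: `v` loses its valence many chips, and
every other vertex `w` gains `m v w` chips. -/
def fire (v : V) (D : V → ℤ) : V → ℤ :=
  fun w => D w + (G.m v w : ℤ) - if w = v then (G.val v : ℤ) else 0

/-- Two divisors are equivalent if one is obtained from the other by a finite
sequence of firing moves. -/
def Equivalent (D D' : V → ℤ) : Prop :=
  Relation.ReflTransGen (fun A B => ∃ v, B = G.fire v A) D D'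

/-- A divisor `D` wins the Gonality Game if for every vertex `q`, the divisor
`D - 1_q` is equivalent to an effective divisor. -/
def Winning (D : V → ℤ) : Prop :=
  ∀ q : V, ∃ D' : V → ℤ,
    G.Equivalent (fun w => D w - if w = q then 1 else 0) D' ∧ Divisor.Effective D'

/-- The gonality of `G`: the minimum degree of an effective divisor that wins
the Gonality Game. -/
noncomputable def gonality : ℕ :=
  sInf {n : ℕ | ∃ D : V → ℤ, Divisor.Effective D ∧ G.Winning D ∧ Divisor.deg D = (n : ℤ)}

end Multigraph

/-- The multigraph associated to a simple graph: one edge for each adjacency. -/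
def Multigraph.ofSimpleGraph {V : Type} [Fintype V] [DecidableEq V]
    (G : SimpleGraph V) [DecidableRel G.Adj] : Multigraph V where
  m u v := if G.Adj u v then 1 else 0
  symm := by
    intro u v
    by_cases h : G.Adj u v
    · simp [h, h.symm]
    · have h' : ¬ G.Adj v u := fun hvu => h hvu.symm
      simp [h, h']
  loopless := by intro v; simp

namespace Multigraph

variable {V : Type} [Fintype V] [DecidableEq V] (G : Multigraph V)

/-- The rank of a divisor `D`: the largest integer `r` such that for every
effective divisor `E` of degree `r`, the divisor `D - E` is equivalent to an
effective divisor.  (Every `r ≤ -1` satisfies the condition vacuously, so the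
rank is `-1` exactly when `D` itself is not equivalent to an effective
divisor.) -/
noncomputable def rank (D : V → ℤ) : ℤ :=
  sSup {r : ℤ | ∀ E : V → ℤ, Divisor.Effective E → Divisor.deg E = r →
    ∃ F : V → ℤ, G.Equivalent (fun v => D v - E v) F ∧ Divisor.Effective F}

/-- The number of edges of `G`. -/
def numEdges : ℕ := (∑ u : V, ∑ v : V, G.m u v) / 2

/-- The genus (first Betti number) of `G`: `|E(G)| - |V(G)| + 1`. -/
def genus : ℤ := (G.numEdges : ℤ) - (Fintype.card V : ℤ) + 1

/-- The canonical divisor of `G`: `val(v) - 2` chips on each vertex `v`. -/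
def canonical : V → ℤ := fun v => (G.val v : ℤ) - 2

end Multigraph

namespace Multigraph

variable {V : Type} [Fintype V] [DecidableEq V] (G : Multigraph V)

/-! ### Basic firing machinery -/

/-- The change at `w` caused by firing `v` once. -/
def delta (v w : V) : ℤ := (G.m v w : ℤ) - if w = v then (G.val v : ℤ) else 0

lemma fire_eq_add_delta (v : V) (D : V → ℤ) :
    G.fire v D = fun w => D w + G.delta v w := by
  funext w; simp only [fire, delta]; ring

lemma equiv_refl (D : V → ℤ) : G.Equivalent D D := Relation.ReflTransGen.refl

lemma equiv_trans {D₁ D₂ D₃ : V → ℤ} (h : G.Equivalent D₁ D₂) (h' : G.Equivalent D₂ D₃) :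
    G.Equivalent D₁ D₃ := Relation.ReflTransGen.trans h h'

lemma equiv_add (D : V → ℤ) (f : V → ℕ) :
    G.Equivalent D (fun w => D w + ∑ v, (f v : ℤ) * G.delta v w) := by
  suffices H : ∀ (N : ℕ) (f : V → ℕ), (∑ v, f v) = N →
      G.Equivalent D (fun w => D w + ∑ v, (f v : ℤ) * G.delta v w) from H _ f rfl
  intro N
  induction N with
  | zero =>
    intro f hf
    have h0 : ∀ v, f v = 0 := by
      intro v
      have := Finset.sum_eq_zero_iff.mp hf
      exact this v (Finset.mem_univ v)
    have : (fun w => D w + ∑ v, (f v : ℤ) * G.delta v w) = D := by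
      funext w; simp [h0]
    rw [this]
    exact Relation.ReflTransGen.refl
  | succ N ih =>
    intro f hf
    obtain ⟨v₀, hv₀⟩ : ∃ v₀, 0 < f v₀ := by
      by_contra h
      push_neg at h
      have : ∀ v ∈ Finset.univ, f v = 0 := fun v _ => Nat.le_zero.mp (h v)
      rw [Finset.sum_eq_zero this] at hf
      omega
    set g : V → ℕ := Function.update f v₀ (f v₀ - 1) with hg
    have hgsum : ∑ v, g v = N := by
      have h1 : ∑ v, g v + 1 = ∑ v, f v := by
        have e1 := Finset.add_sum_erase Finset.univ g (Finset.mem_univ v₀)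
        have e2 := Finset.add_sum_erase Finset.univ f (Finset.mem_univ v₀)
        have e3 : ∑ v ∈ Finset.univ.erase v₀, g v = ∑ v ∈ Finset.univ.erase v₀, f v := by
          refine Finset.sum_congr rfl fun v hv => ?_
          have : v ≠ v₀ := Finset.ne_of_mem_erase hv
          simp [hg, Function.update_of_ne this]
        have e4 : g v₀ = f v₀ - 1 := by simp [hg]
        omega
      omega
    refine (ih g hgsum).tail ⟨v₀, ?_⟩
    rw [fire_eq_add_delta]
    funext w
    have key : ∑ v, (f v : ℤ) * G.delta v w = (∑ v, (g v : ℤ) * G.delta v w) + G.delta v₀ w := by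
      have e1 := Finset.add_sum_erase Finset.univ (fun v => (g v : ℤ) * G.delta v w)
        (Finset.mem_univ v₀)
      have e2 := Finset.add_sum_erase Finset.univ (fun v => (f v : ℤ) * G.delta v w)
        (Finset.mem_univ v₀)
      have e3 : ∑ v ∈ Finset.univ.erase v₀, (g v : ℤ) * G.delta v w
          = ∑ v ∈ Finset.univ.erase v₀, (f v : ℤ) * G.delta v w := by
        refine Finset.sum_congr rfl fun v hv => ?_
        have : v ≠ v₀ := Finset.ne_of_mem_erase hv
        simp [hg, Function.update_of_ne this]
      have e4 : (g v₀ : ℤ) = (f v₀ : ℤ) - 1 := by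
        simp only [hg, Function.update_self]
        omega
      rw [← e1, ← e2, e3]
      simp only [e4]
      ring
    rw [key]
    ring

/-- Firing every vertex of a set `A` once. -/
def fireSet (A : Finset V) (D : V → ℤ) : V → ℤ :=
  fun w => D w + ∑ v ∈ A, (G.m v w : ℤ) - (if w ∈ A then (G.val w : ℤ) else 0)

lemma equiv_fireSet (D : V → ℤ) (A : Finset V) : G.Equivalent D (G.fireSet A D) := by
  have h := G.equiv_add D (fun v => if v ∈ A then 1 else 0)
  have e : (fun w => D w + ∑ v, ((if v ∈ A then 1 else 0 : ℕ) : ℤ) * G.delta v w)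
      = G.fireSet A D := by
    funext w
    have e1 : ∑ v, ((if v ∈ A then 1 else 0 : ℕ) : ℤ) * G.delta v w
        = ∑ v ∈ A, G.delta v w := by
      push_cast
      simp [ite_mul, Finset.sum_ite_mem]
    rw [e1]
    have e2 : ∑ v ∈ A, G.delta v w
        = (∑ v ∈ A, (G.m v w : ℤ)) - ∑ v ∈ A, (if w = v then (G.val v : ℤ) else 0) := by
      rw [← Finset.sum_sub_distrib]
      rfl
    have e3 : ∑ v ∈ A, (if w = v then (G.val v : ℤ) else 0)
        = if w ∈ A then (G.val w : ℤ) else 0 := Finset.sum_ite_eq A w _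
    rw [e2, e3]
    simp [fireSet]
    ring
  rwa [e] at h

lemma fireSet_mem {A : Finset V} {w : V} (h : w ∈ A) (D : V → ℤ) :
    G.fireSet A D w = D w - ∑ v ∈ Aᶜ, (G.m v w : ℤ) := by
  have hval : (G.val w : ℤ) = (∑ v ∈ A, (G.m v w : ℤ)) + ∑ v ∈ Aᶜ, (G.m v w : ℤ) := by
    rw [Finset.sum_add_sum_compl]
    have : ∀ v, G.m v w = G.m w v := fun v => G.symm v w
    simp only [this]
    rw [Multigraph.val]
    push_cast
    rfl
  simp only [fireSet, if_pos h, hval]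
  ring

lemma fireSet_not_mem {A : Finset V} {w : V} (h : w ∉ A) (D : V → ℤ) :
    G.fireSet A D w = D w + ∑ v ∈ A, (G.m v w : ℤ) := by
  simp only [fireSet, if_neg h]
  ring

lemma deg_fire (v : V) (D : V → ℤ) : Divisor.deg (G.fire v D) = Divisor.deg D := by
  unfold Divisor.deg
  rw [fire_eq_add_delta]
  rw [Finset.sum_add_distrib]
  have : ∑ w, G.delta v w = 0 := by
    unfold delta
    rw [Finset.sum_sub_distrib]
    have e1 : ∑ w, (if w = v then (G.val v : ℤ) else 0) = (G.val v : ℤ) := by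
      rw [Finset.sum_ite_eq' Finset.univ v]
      simp
    have e2 : ∑ w, (G.m v w : ℤ) = (G.val v : ℤ) := by
      rw [Multigraph.val]; push_cast; rfl
    rw [e1, e2]
    ring
  rw [this, add_zero]

lemma deg_of_equiv {D D' : V → ℤ} (h : G.Equivalent D D') :
    Divisor.deg D' = Divisor.deg D := by
  induction h with
  | refl => rfl
  | tail _ hstep ih =>
    obtain ⟨v, rfl⟩ := hstep
    rw [G.deg_fire, ih]

/-! ### Counting edges via a strict total order -/

lemma two_mul_sum_lt (r : V → V → Prop) [DecidableRel r] (hirr : ∀ v, ¬ r v v)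
    (hdich : ∀ u v, u ≠ v → (r u v ↔ ¬ r v u)) :
    2 * ∑ v, ∑ u ∈ univ.filter (fun u => r u v), G.m u v = ∑ v, ∑ u, G.m u v := by
  have hsplit : ∑ v, ∑ u, G.m u v
      = (∑ v, ∑ u ∈ univ.filter (fun u => r u v), G.m u v)
        + ∑ v, ∑ u ∈ univ.filter (fun u => ¬ r u v), G.m u v := by
    rw [← Finset.sum_add_distrib]
    exact Finset.sum_congr rfl fun v _ => (Finset.sum_filter_add_sum_filter_not _ _ _).symm
  have hQ : ∑ v, ∑ u ∈ univ.filter (fun u => ¬ r u v), G.m u v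
      = ∑ v, ∑ u ∈ univ.filter (fun u => r v u), G.m u v := by
    refine Finset.sum_congr rfl fun v _ => ?_
    refine (Finset.sum_subset ?_ ?_).symm
    · intro u hu
      simp only [Finset.mem_filter, Finset.mem_univ, true_and] at hu ⊢
      intro hruv
      have huv : u ≠ v := by rintro rfl; exact hirr u hu
      exact ((hdich u v huv).mp hruv) hu
    · intro u hu hu2
      simp only [Finset.mem_filter, Finset.mem_univ, true_and] at hu hu2
      by_cases h : u = v
      · subst h; exact G.loopless u
      · exact absurd ((hdich u v h).mpr hu2) hu
  have hswap : ∑ v, ∑ u ∈ univ.filter (fun u => r v u), G.m u v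
      = ∑ v, ∑ u ∈ univ.filter (fun u => r u v), G.m u v := by
    have e1 : ∑ v, ∑ u ∈ univ.filter (fun u => r v u), G.m u v
        = ∑ v : V, ∑ u : V, if r v u then G.m u v else 0 :=
      Finset.sum_congr rfl fun v _ => Finset.sum_filter _ _
    have e2 : ∑ v, ∑ u ∈ univ.filter (fun u => r u v), G.m u v
        = ∑ v : V, ∑ u : V, if r u v then G.m u v else 0 :=
      Finset.sum_congr rfl fun v _ => Finset.sum_filter _ _
    rw [e1, e2, Finset.sum_comm]
    refine Finset.sum_congr rfl fun u _ => Finset.sum_congr rfl fun v _ => ?_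
    rw [G.symm u v]
  omega

/-- If every vertex is "dominated" (as in the output of a complete burning),
the degree is at most `g - 1`. -/
lemma deg_le_genus_sub_one (r : V → V → Prop) [DecidableRel r] (hirr : ∀ v, ¬ r v v)
    (hdich : ∀ u v, u ≠ v → (r u v ↔ ¬ r v u)) (D : V → ℤ)
    (hdom : ∀ v, D v ≤ (∑ u ∈ univ.filter (fun u => r u v), (G.m u v : ℤ)) - 1) :
    Divisor.deg D ≤ G.genus - 1 := by
  have hsum : Divisor.deg D
      ≤ ∑ v, ((∑ u ∈ univ.filter (fun u => r u v), (G.m u v : ℤ)) - 1) :=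
    Finset.sum_le_sum (fun v _ => hdom v)
  have hP : ∑ v, ((∑ u ∈ univ.filter (fun u => r u v), (G.m u v : ℤ)) - 1)
      = (∑ v, ∑ u ∈ univ.filter (fun u => r u v), (G.m u v : ℤ)) - (Fintype.card V : ℤ) := by
    rw [Finset.sum_sub_distrib]
    simp [Finset.card_univ]
  have h2 := G.two_mul_sum_lt r hirr hdich
  have hSc : ∑ u : V, ∑ v : V, G.m u v = ∑ v : V, ∑ u : V, G.m u v := Finset.sum_comm
  have hNE : G.numEdges = ∑ v, ∑ u ∈ univ.filter (fun u => r u v), G.m u v := by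
    unfold numEdges
    omega
  have hcast : (∑ v, ∑ u ∈ univ.filter (fun u => r u v), (G.m u v : ℤ))
      = (G.numEdges : ℤ) := by
    rw [hNE]
    push_cast
    rfl
  rw [hP, hcast] at hsum
  unfold genus
  linarith

/-! ### Dhar's burning algorithm -/

/-- The burning process of Dhar's algorithm. -/
def burn (q : V) (D : V → ℤ) : ℕ → Finset V
  | 0 => {q}
  | k + 1 => burn q D k ∪
      univ.filter (fun w => w ∉ burn q D k ∧ D w < ∑ u ∈ burn q D k, (G.m u w : ℤ))

lemma dhar (q : V) (D : V → ℤ) (hq : D q < 0) (hdeg : Divisor.deg D = G.genus) :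
    ∃ A : Finset V, A.Nonempty ∧ q ∉ A ∧
      ∀ x ∈ A, (∑ u ∈ Aᶜ, (G.m u x : ℤ)) ≤ D x := by
  set B : ℕ → Finset V := G.burn q D with hBdef
  have hB0 : B 0 = {q} := rfl
  have hBsucc : ∀ k, B (k+1)
      = B k ∪ univ.filter (fun (w : V) => w ∉ B k ∧ D w < ∑ u ∈ B k, (G.m u w : ℤ)) :=
    fun k => rfl
  have hmono : ∀ k, B k ⊆ B (k+1) := fun k => by
    rw [hBsucc]; exact Finset.subset_union_left
  have hmono' : ∀ k l, k ≤ l → B k ⊆ B l := by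
    intro k l h
    induction h with
    | refl => exact subset_rfl
    | step _ ih => exact ih.trans (hmono _)
  have hfix : ∃ j, B (j+1) = B j := by
    by_contra h
    push_neg at h
    have hcard : ∀ k, k + 1 ≤ (B k).card := by
      intro k
      induction k with
      | zero => simp [hB0]
      | succ k ih =>
        have hss : B k ⊂ B (k+1) :=
          (Finset.ssubset_iff_subset_ne).mpr ⟨hmono k, fun e => h k e.symm⟩
        have := Finset.card_lt_card hss
        omega
    have h1 := hcard (Fintype.card V)
    have h2 := Finset.card_le_univ (B (Fintype.card V))
    omega
  obtain ⟨j, hj⟩ := hfix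
  have hqB : q ∈ B j := hmono' 0 j (Nat.zero_le j) (by simp [hB0])
  have hstuck : ∀ w, w ∉ B j → (∑ u ∈ B j, (G.m u w : ℤ)) ≤ D w := by
    intro w hw
    by_contra hlt
    push_neg at hlt
    have hmem : w ∈ B (j+1) := by
      rw [hBsucc]
      exact Finset.mem_union_right _ (Finset.mem_filter.mpr ⟨Finset.mem_univ w, hw, hlt⟩)
    rw [hj] at hmem
    exact hw hmem
  by_cases hall : B j = univ
  · exfalso
    have hex : ∀ v : V, ∃ k, v ∈ B k := fun v => ⟨j, by rw [hall]; exact Finset.mem_univ v⟩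
    let t : V → ℕ := fun v => Nat.find (hex v)
    have htmem : ∀ v, v ∈ B (t v) := fun v => Nat.find_spec (hex v)
    have htmin : ∀ v k, k < t v → v ∉ B k := fun v k hk => Nat.find_min (hex v) hk
    have htle : ∀ v k, v ∈ B k → t v ≤ k := fun v k h => Nat.find_min' (hex v) h
    let e := Fintype.equivFin V
    let r : V → V → Prop := fun u v => t u < t v ∨ (t u = t v ∧ e u < e v)
    haveI instr : DecidableRel r := fun u v => by
      change Decidable (t u < t v ∨ (t u = t v ∧ e u < e v))
      infer_instance
    have hirr : ∀ v, ¬ r v v := by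
      intro v h
      rcases h with h | ⟨_, h⟩
      · omega
      · exact lt_irrefl _ h
    have hdich : ∀ u v, u ≠ v → (r u v ↔ ¬ r v u) := by
      intro u v huv
      have he : (e u : ℕ) ≠ (e v : ℕ) := fun h => huv (e.injective (Fin.ext h))
      change (t u < t v ∨ (t u = t v ∧ e u < e v)) ↔ ¬(t v < t u ∨ (t v = t u ∧ e v < e u))
      simp only [Fin.lt_def]
      omega
    have hdom : ∀ v, D v ≤ (∑ u ∈ univ.filter (fun u => r u v), (G.m u v : ℤ)) - 1 := by
      intro v
      by_cases hv : v = q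
      · subst hv
        have h0 : (0:ℤ) ≤ ∑ u ∈ univ.filter (fun u => r u v), (G.m u v : ℤ) :=
          Finset.sum_nonneg (fun u _ => by positivity)
        omega
      · have htv : t v ≠ 0 := by
          intro h0
          have hm := htmem v
          rw [h0, hB0] at hm
          simp only [Finset.mem_singleton] at hm
          exact hv hm
        obtain ⟨k, hk⟩ : ∃ k, t v = k + 1 := ⟨t v - 1, by omega⟩
        have hvin : v ∈ B (k+1) := hk ▸ htmem v
        have hvout : v ∉ B k := htmin v k (by omega)
        have hcond : D v < ∑ u ∈ B k, (G.m u v : ℤ) := by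
          rw [hBsucc] at hvin
          rcases Finset.mem_union.mp hvin with h | h
          · exact absurd h hvout
          · exact (Finset.mem_filter.mp h).2.2
        have hsub : B k ⊆ univ.filter (fun u => r u v) := by
          intro u hu
          simp only [Finset.mem_filter, Finset.mem_univ, true_and]
          exact Or.inl (by have := htle u k hu; omega)
        have hmonos : ∑ u ∈ B k, (G.m u v : ℤ)
            ≤ ∑ u ∈ univ.filter (fun u => r u v), (G.m u v : ℤ) :=
          Finset.sum_le_sum_of_subset_of_nonneg hsub (fun _ _ _ => by positivity)
        omega
    have hle := G.deg_le_genus_sub_one r hirr hdich D hdom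
    omega
  · refine ⟨(B j)ᶜ, Finset.nonempty_iff_ne_empty.mpr
        (fun he => hall ((Finset.compl_eq_empty_iff _).mp he)), ?_, ?_⟩
    · simp [hqB]
    · intro x hx
      rw [compl_compl]
      exact hstuck x (Finset.mem_compl.mp hx)

/-! ### The superharmonic weight function -/

lemma exists_weight (hG : G.Connected) (q : V) :
    ∃ w : V → ℚ, w q = 0 ∧ (∀ v, 0 ≤ w v) ∧
      ∀ x, x ≠ q → (G.val x : ℚ) * w x - ∑ y, (G.m x y : ℚ) * w y = 1 := by
  have hconn : G.toSimpleGraph.Connected := hG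
  haveI : Nonempty V := hconn.nonempty
  let L : (V → ℚ) →ₗ[ℚ] (V → ℚ) :=
    { toFun := fun w => fun x => (G.val x : ℚ) * w x - ∑ y, (G.m x y : ℚ) * w y
      map_add' := by
        intro w u; funext x
        simp only [Pi.add_apply]
        rw [show ∑ y, (G.m x y : ℚ) * (w y + u y)
            = ∑ y, ((G.m x y : ℚ) * w y + (G.m x y : ℚ) * u y) from
          Finset.sum_congr rfl fun y _ => by ring, Finset.sum_add_distrib]
        ring
      map_smul' := by
        intro c w; funext x
        simp only [Pi.smul_apply, smul_eq_mul, RingHom.id_apply]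
        rw [show ∑ y, (G.m x y : ℚ) * (c * w y) = ∑ y, c * ((G.m x y : ℚ) * w y) from
          Finset.sum_congr rfl fun y _ => by ring, ← Finset.mul_sum]
        ring }
  have hLapp : ∀ w x, L w x = (G.val x : ℚ) * w x - ∑ y, (G.m x y : ℚ) * w y :=
    fun w x => rfl
  have hval : ∀ x : V, (G.val x : ℚ) = ∑ y, (G.m x y : ℚ) := by
    intro x; rw [Multigraph.val]; push_cast; rfl
  have hvalT : ∀ y : V, (G.val y : ℚ) = ∑ x, (G.m x y : ℚ) := by
    intro y; rw [hval y]; exact Finset.sum_congr rfl fun x _ => by rw [G.symm]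
  have hL1 : L (fun _ => (1:ℚ)) = 0 := by
    funext x
    rw [hLapp]
    simp only [mul_one, Pi.zero_apply]
    rw [hval x]
    ring
  have hker : LinearMap.ker L = Submodule.span ℚ {(fun _ => 1 : V → ℚ)} := by
    apply le_antisymm
    · intro w hw
      rw [LinearMap.mem_ker] at hw
      obtain ⟨x₀, -, hx₀⟩ := Finset.exists_max_image univ w univ_nonempty
      have hprop : ∀ u, w u = w x₀ → ∀ y, G.toSimpleGraph.Adj u y → w y = w x₀ := by
        intro u hu y hadj
        have h0 : (G.val u : ℚ) * w u - ∑ z, (G.m u z : ℚ) * w z = 0 := by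
          have h := congrFun hw u
          rw [Pi.zero_apply] at h
          rw [← hLapp w u]
          exact h
        have hsum0 : ∑ z, (G.m u z : ℚ) * (w u - w z) = 0 := by
          have e : ∑ z, (G.m u z : ℚ) * (w u - w z)
              = (∑ z, (G.m u z : ℚ)) * w u - ∑ z, (G.m u z : ℚ) * w z := by
            rw [Finset.sum_mul, ← Finset.sum_sub_distrib]
            exact Finset.sum_congr rfl fun z _ => by ring
          rw [e, ← hval u]
          linarith
        have hz := (Finset.sum_eq_zero_iff_of_nonneg (fun z _ => by
          have h1 : w z ≤ w x₀ := hx₀ z (Finset.mem_univ z)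
          have h2 : w z ≤ w u := by rw [hu]; exact h1
          have h3 : (0:ℚ) ≤ (G.m u z : ℚ) := by positivity
          exact mul_nonneg h3 (by linarith))).mp hsum0 y (Finset.mem_univ y)
        have hmpos : (0:ℚ) < (G.m u y : ℚ) := by exact_mod_cast hadj
        rcases mul_eq_zero.mp hz with h | h
        · exact absurd h (ne_of_gt hmpos)
        · have : w y = w u := by linarith
          rw [this, hu]
      have hwalk : ∀ (a c : V) (pp : G.toSimpleGraph.Walk a c),
          w a = w x₀ → w c = w x₀ := by
        intro a c pp
        induction pp with
        | nil => exact fun h => h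
        | cons hadj _ ih => exact fun ha => ih (hprop _ ha _ hadj)
      have hconst : ∀ v, w v = w x₀ := by
        intro v
        obtain ⟨p⟩ := hconn.preconnected x₀ v
        exact hwalk x₀ v p rfl
      rw [Submodule.mem_span_singleton]
      exact ⟨w x₀, by funext v; simp [hconst v]⟩
    · rw [Submodule.span_le]
      intro x hx
      simp only [Set.mem_singleton_iff] at hx
      subst hx
      exact LinearMap.mem_ker.mpr hL1
  let S : (V → ℚ) →ₗ[ℚ] ℚ :=
    { toFun := fun w => ∑ x, w x
      map_add' := fun w u => by simp [Finset.sum_add_distrib]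
      map_smul' := fun c w => by simp [Finset.mul_sum]
      }
  have hSapp : ∀ w : V → ℚ, S w = ∑ x, w x := fun w => rfl
  have hrange_le : LinearMap.range L ≤ LinearMap.ker S := by
    rintro b ⟨w, rfl⟩
    rw [LinearMap.mem_ker, hSapp]
    have e00 : ∑ x, L w x = ∑ x, ((G.val x : ℚ) * w x - ∑ y, (G.m x y : ℚ) * w y) :=
      Finset.sum_congr rfl fun x _ => hLapp w x
    rw [e00, Finset.sum_sub_distrib, Finset.sum_comm]
    have e : ∑ y : V, ∑ x : V, (G.m x y : ℚ) * w y = ∑ y, (G.val y : ℚ) * w y := by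
      refine Finset.sum_congr rfl fun y _ => ?_
      rw [← Finset.sum_mul, ← hvalT y]
    rw [e]
    exact sub_self _
  have hfr : Module.finrank ℚ (V → ℚ) = Fintype.card V := Module.finrank_pi ℚ
  have hkerdim : Module.finrank ℚ (LinearMap.ker L) = 1 := by
    rw [hker]
    refine finrank_span_singleton ?_
    intro h
    have := congrFun h (Classical.arbitrary V)
    simp at this
  have hSne : S ≠ 0 := by
    intro h
    have h1 : S (fun _ => (1:ℚ)) = 0 := by rw [h]; rfl
    rw [hSapp] at h1
    have h2 : (Fintype.card V : ℚ) = 0 := by simpa [Finset.card_univ] using h1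
    exact Fintype.card_ne_zero (by exact_mod_cast h2)
  have hSker : Module.finrank ℚ (LinearMap.ker S) + 1 = Fintype.card V := by
    have := Module.Dual.finrank_ker_add_one_of_ne_zero hSne
    rwa [hfr] at this
  have hrange : Module.finrank ℚ (LinearMap.range L) + 1 = Fintype.card V := by
    have := LinearMap.finrank_range_add_finrank_ker L
    rw [hfr, hkerdim] at this
    omega
  have heq : LinearMap.range L = LinearMap.ker S :=
    Submodule.eq_of_le_of_finrank_le hrange_le (by omega)
  let b : V → ℚ := fun x => 1 - (if x = q then (Fintype.card V : ℚ) else 0)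
  have hbS : b ∈ LinearMap.ker S := by
    rw [LinearMap.mem_ker, hSapp]
    show ∑ x, (1 - (if x = q then (Fintype.card V : ℚ) else 0)) = 0
    rw [Finset.sum_sub_distrib, Finset.sum_ite_eq' univ q]
    simp [Finset.card_univ]
  have hbrange : b ∈ LinearMap.range L := heq ▸ hbS
  obtain ⟨w₀, hw₀⟩ := hbrange
  set w : V → ℚ := fun v => w₀ v - w₀ q with hwdef
  have hLw : ∀ x, (G.val x : ℚ) * w x - ∑ y, (G.m x y : ℚ) * w y = b x := by
    intro x
    have h1 : L w = b := by
      have e : w = w₀ - (w₀ q) • (fun _ => (1:ℚ)) := by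
        funext v; simp [hwdef]
      rw [e, map_sub, map_smul, hL1, hw₀]
      simp
    have := congrFun h1 x
    rw [hLapp] at this
    exact this
  have hwq : w q = 0 := by simp [hwdef]
  have hwpos : ∀ v, 0 ≤ w v := by
    obtain ⟨x₁, -, hx₁⟩ := Finset.exists_min_image univ w univ_nonempty
    intro v
    by_contra hneg
    push_neg at hneg
    have hx₁neg : w x₁ < 0 := lt_of_le_of_lt (hx₁ v (Finset.mem_univ v)) hneg
    have hx₁q : x₁ ≠ q := by
      intro h; rw [h, hwq] at hx₁neg; exact lt_irrefl _ hx₁neg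
    have h1 : (G.val x₁ : ℚ) * w x₁ - ∑ y, (G.m x₁ y : ℚ) * w y = 1 := by
      rw [hLw x₁]
      simp [b, hx₁q]
    have h2 : (G.val x₁ : ℚ) * w x₁ ≤ ∑ y, (G.m x₁ y : ℚ) * w y := by
      have hs : ∑ y, (G.m x₁ y : ℚ) * w x₁ ≤ ∑ y, (G.m x₁ y : ℚ) * w y :=
        Finset.sum_le_sum fun y _ =>
          mul_le_mul_of_nonneg_left (hx₁ y (Finset.mem_univ y)) (by positivity)
      rw [hval x₁, Finset.sum_mul]
      exact hs
    linarith
  refine ⟨w, hwq, hwpos, fun x hx => ?_⟩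
  rw [hLw x]
  simp [b, hx]

/-! ### Phase 2 -/

lemma phase2_step (q : V) (w : V → ℚ)
    (hsup : ∀ x, x ≠ q → (G.val x : ℚ) * w x - ∑ y, (G.m x y : ℚ) * w y = 1)
    (D : V → ℤ) (hdeg : Divisor.deg D = G.genus) (hoff : ∀ v, v ≠ q → 0 ≤ D v)
    (hq : D q < 0) :
    ∃ D' : V → ℤ, G.Equivalent D D' ∧ Divisor.deg D' = G.genus ∧
      (∀ v, v ≠ q → 0 ≤ D' v) ∧
      (∑ v, (D' v : ℚ) * w v) + 1 ≤ ∑ v, (D v : ℚ) * w v := by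
  obtain ⟨A, hAne, hAq, hAfire⟩ := G.dhar q D hq hdeg
  refine ⟨G.fireSet A D, G.equiv_fireSet D A, ?_, ?_, ?_⟩
  · rw [G.deg_of_equiv (G.equiv_fireSet D A), hdeg]
  · intro v hv
    by_cases hvA : v ∈ A
    · rw [G.fireSet_mem hvA]
      have h1 := hAfire v hvA
      omega
    · rw [G.fireSet_not_mem hvA]
      have h0 : (0:ℤ) ≤ ∑ u ∈ A, (G.m u v : ℤ) :=
        Finset.sum_nonneg fun u _ => by positivity
      have h1 := hoff v hv
      omega
  · have key : ∑ v, ((G.fireSet A D v : ℚ) * w v)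
        = (∑ v, (D v : ℚ) * w v) - A.card := by
      have e1 : ∀ v : V, ((G.fireSet A D v : ℚ) * w v)
          = (D v : ℚ) * w v + (∑ u ∈ A, (G.m u v : ℚ) * w v)
            - (if v ∈ A then (G.val v : ℚ) * w v else 0) := by
        intro v
        show ((D v + ∑ u ∈ A, (G.m u v : ℤ)
            - (if v ∈ A then (G.val v : ℤ) else 0) : ℤ) : ℚ) * w v = _
        push_cast
        by_cases h : v ∈ A <;> simp only [h, if_true, if_false] <;>
          rw [sub_mul, add_mul, Finset.sum_mul] <;> ring
      rw [Finset.sum_congr rfl (fun v _ => e1 v)]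
      rw [Finset.sum_sub_distrib, Finset.sum_add_distrib]
      have eT1 : ∑ v, ∑ u ∈ A, (G.m u v : ℚ) * w v
          = ∑ u ∈ A, ∑ v, (G.m u v : ℚ) * w v := Finset.sum_comm
      have eT2 : ∑ v, (if v ∈ A then (G.val v : ℚ) * w v else 0)
          = ∑ v ∈ A, (G.val v : ℚ) * w v := by
        rw [Finset.sum_ite_mem, Finset.univ_inter]
      rw [eT1, eT2]
      have eT3 : ∑ u ∈ A, ∑ v, (G.m u v : ℚ) * w v
          = ∑ u ∈ A, ((G.val u : ℚ) * w u - 1) := by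
        refine Finset.sum_congr rfl fun u hu => ?_
        have huq : u ≠ q := fun h => hAq (h ▸ hu)
        have := hsup u huq
        linarith
      rw [eT3, Finset.sum_sub_distrib]
      simp only [Finset.sum_const, nsmul_eq_mul, mul_one]
      ring
    rw [key]
    have hA1 : (1:ℚ) ≤ A.card := by
      have := Finset.card_pos.mpr hAne
      exact_mod_cast this
    linarith

lemma phase2 (hG : G.Connected) (q : V) (w : V → ℚ) (hwq : w q = 0)
    (hw0 : ∀ v, 0 ≤ w v)
    (hsup : ∀ x, x ≠ q → (G.val x : ℚ) * w x - ∑ y, (G.m x y : ℚ) * w y = 1) :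
    ∀ (k : ℕ) (D : V → ℤ), Divisor.deg D = G.genus → (∀ v, v ≠ q → 0 ≤ D v) →
      (∑ v, (D v : ℚ) * w v) ≤ k →
      ∃ F : V → ℤ, G.Equivalent D F ∧ Divisor.Effective F := by
  intro k
  induction k with
  | zero =>
    intro D hdeg hoff hpot
    by_cases hq : 0 ≤ D q
    · refine ⟨D, G.equiv_refl D, fun v => ?_⟩
      by_cases h : v = q
      · rw [h]; exact hq
      · exact hoff v h
    · push_neg at hq
      exfalso
      obtain ⟨D', hE, hdeg', hoff', hpot'⟩ := G.phase2_step q w hsup D hdeg hoff hq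
      have hnn : (0:ℚ) ≤ ∑ v, (D' v : ℚ) * w v := by
        refine Finset.sum_nonneg fun v _ => ?_
        by_cases h : v = q
        · rw [h, hwq, mul_zero]
        · exact mul_nonneg (by exact_mod_cast hoff' v h) (hw0 v)
      push_cast at hpot
      linarith
  | succ k ih =>
    intro D hdeg hoff hpot
    by_cases hq : 0 ≤ D q
    · refine ⟨D, G.equiv_refl D, fun v => ?_⟩
      by_cases h : v = q
      · rw [h]; exact hq
      · exact hoff v h
    · push_neg at hq
      obtain ⟨D', hE, hdeg', hoff', hpot'⟩ := G.phase2_step q w hsup D hdeg hoff hq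
      have hpot'' : (∑ v, (D' v : ℚ) * w v) ≤ k := by
        push_cast at hpot ⊢
        linarith
      obtain ⟨F, hEF, hFeff⟩ := ih D' hdeg' hoff' hpot''
      exact ⟨F, G.equiv_trans hE hEF, hFeff⟩

lemma phase1 (hG : G.Connected) (q : V) (D : V → ℤ) :
    ∃ D' : V → ℤ, G.Equivalent D D' ∧ ∀ v, v ≠ q → 0 ≤ D' v := by
  have hconn : G.toSimpleGraph.Connected := hG
  set t : V → ℕ := fun v => G.toSimpleGraph.dist q v with ht
  have hlow : ∀ v, v ≠ q → ∃ u, 0 < G.m u v ∧ t u < t v := by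
    intro v hv
    obtain ⟨p, hp⟩ := hconn.exists_walk_length_eq_dist q v
    cases hrev : p.reverse with
    | nil => exact absurd rfl hv
    | @cons _ b _ hadj p' =>
      have h1 : p.reverse.length = p.length := SimpleGraph.Walk.length_reverse p
      rw [hrev] at h1
      rw [SimpleGraph.Walk.length_cons] at h1
      have hb : G.toSimpleGraph.dist q b ≤ p'.length := by
        have h2 := SimpleGraph.dist_le p'.reverse
        rwa [SimpleGraph.Walk.length_reverse] at h2
      refine ⟨b, ?_, ?_⟩
      · have : G.toSimpleGraph.Adj b v := hadj.symm
        exact this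
      · show G.toSimpleGraph.dist q b < G.toSimpleGraph.dist q v
        omega
  set S : ℕ := ∑ v : V, ∑ u : V, G.m u v with hS
  set C : ℕ := S + 1 with hC
  have hC1 : 1 ≤ C := by omega
  set φ : (V → ℤ) → ℕ :=
    fun E => ∑ v ∈ univ.erase q, (-(E v)).toNat * C ^ (t v) with hφ
  suffices H : ∀ (N : ℕ) (E : V → ℤ), φ E ≤ N →
      ∃ D' : V → ℤ, G.Equivalent E D' ∧ ∀ v, v ≠ q → 0 ≤ D' v from H (φ D) D le_rfl
  have step : ∀ (E : V → ℤ) (v₀ : V), v₀ ≠ q → E v₀ < 0 →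
      ∃ E' : V → ℤ, G.Equivalent E E' ∧ φ E' < φ E := by
    intro E v₀ hv₀q hneg
    set A : Finset V := univ.filter (fun u => t u < t v₀) with hA
    have hmemA : ∀ u, u ∈ A ↔ t u < t v₀ := by
      intro u
      simp [hA]
    have hv₀A : v₀ ∉ A := by
      rw [hmemA]
      omega
    refine ⟨G.fireSet A E, G.equiv_fireSet E A, ?_⟩
    obtain ⟨u₀, hu₀m, hu₀t⟩ := hlow v₀ hv₀q
    have hu₀A : u₀ ∈ A := (hmemA u₀).mpr hu₀t
    have htv₀ : 1 ≤ t v₀ := by omega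
    set o : V → ℕ := fun v => ∑ u ∈ Aᶜ, G.m u v with ho
    have hgain : (1:ℤ) ≤ ∑ u ∈ A, (G.m u v₀ : ℤ) := by
      have h1 : (G.m u₀ v₀ : ℤ) ≤ ∑ u ∈ A, (G.m u v₀ : ℤ) :=
        Finset.single_le_sum (f := fun u => (G.m u v₀ : ℤ))
          (fun u _ => by positivity) hu₀A
      have h2 : (1:ℤ) ≤ (G.m u₀ v₀ : ℤ) := by exact_mod_cast hu₀m
      linarith
    -- pointwise bound
    have hpoint : ∀ v ∈ univ.erase q,
        (-(G.fireSet A E v)).toNat * C ^ (t v) + (if v = v₀ then C ^ (t v₀) else 0)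
        ≤ (-(E v)).toNat * C ^ (t v) + (if v ∈ A then o v * C ^ (t v) else 0) := by
      intro v hv
      by_cases hvv : v = v₀
      · subst hvv
        rw [if_pos rfl, if_neg hv₀A]
        have hE' : G.fireSet A E v = E v + ∑ u ∈ A, (G.m u v : ℤ) :=
          G.fireSet_not_mem hv₀A E
        have hkey : (-(G.fireSet A E v)).toNat + 1 ≤ (-(E v)).toNat := by
          rw [hE']
          omega
        calc (-(G.fireSet A E v)).toNat * C ^ (t v) + C ^ (t v)
            = ((-(G.fireSet A E v)).toNat + 1) * C ^ (t v) := by ring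
          _ ≤ (-(E v)).toNat * C ^ (t v) := Nat.mul_le_mul_right _ hkey
          _ ≤ (-(E v)).toNat * C ^ (t v) + 0 := by omega
      · rw [if_neg hvv]
        by_cases hvA : v ∈ A
        · rw [if_pos hvA]
          have hE' : G.fireSet A E v = E v - ∑ u ∈ Aᶜ, (G.m u v : ℤ) :=
            G.fireSet_mem hvA E
          have hcast : (∑ u ∈ Aᶜ, (G.m u v : ℤ)) = (o v : ℤ) := by
            rw [ho]
            push_cast
            rfl
          have hkey : (-(G.fireSet A E v)).toNat ≤ (-(E v)).toNat + o v := by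
            rw [hE', hcast]
            omega
          calc (-(G.fireSet A E v)).toNat * C ^ (t v) + 0
              = (-(G.fireSet A E v)).toNat * C ^ (t v) := by omega
            _ ≤ ((-(E v)).toNat + o v) * C ^ (t v) := Nat.mul_le_mul_right _ hkey
            _ = (-(E v)).toNat * C ^ (t v) + o v * C ^ (t v) := by ring
        · rw [if_neg hvA]
          have hE' : G.fireSet A E v = E v + ∑ u ∈ A, (G.m u v : ℤ) :=
            G.fireSet_not_mem hvA E
          have hnn : (0:ℤ) ≤ ∑ u ∈ A, (G.m u v : ℤ) :=
            Finset.sum_nonneg fun u _ => by positivity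
          have hkey : (-(G.fireSet A E v)).toNat ≤ (-(E v)).toNat := by
            rw [hE']
            omega
          have := Nat.mul_le_mul_right (C ^ (t v)) hkey
          omega
    have hsum := Finset.sum_le_sum hpoint
    rw [Finset.sum_add_distrib, Finset.sum_add_distrib] at hsum
    have hsum1 : ∑ v ∈ univ.erase q, (if v = v₀ then C ^ (t v₀) else 0) = C ^ (t v₀) := by
      rw [Finset.sum_ite_eq' (univ.erase q) v₀]
      rw [if_pos (Finset.mem_erase.mpr ⟨hv₀q, Finset.mem_univ v₀⟩)]
    have hsum2 : ∑ v ∈ univ.erase q, (if v ∈ A then o v * C ^ (t v) else 0)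
        ≤ ∑ v ∈ A, o v * C ^ (t v) := by
      rw [Finset.sum_ite_mem]
      exact Finset.sum_le_sum_of_subset (Finset.inter_subset_right)
    have hbound : ∑ v ∈ A, o v * C ^ (t v) < C ^ (t v₀) := by
      have hb1 : ∀ v ∈ A, o v * C ^ (t v) ≤ o v * C ^ (t v₀ - 1) := by
        intro v hvA
        have : t v < t v₀ := (hmemA v).mp hvA
        exact Nat.mul_le_mul_left _ (Nat.pow_le_pow_right hC1 (by omega))
      have hb2 : ∑ v ∈ A, o v * C ^ (t v) ≤ (∑ v ∈ A, o v) * C ^ (t v₀ - 1) := by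
        rw [Finset.sum_mul]
        exact Finset.sum_le_sum hb1
      have hb3 : ∑ v ∈ A, o v ≤ S := by
        rw [hS]
        calc ∑ v ∈ A, o v ≤ ∑ v ∈ A, ∑ u : V, G.m u v := by
              refine Finset.sum_le_sum fun v _ => ?_
              exact Finset.sum_le_sum_of_subset (Finset.subset_univ _)
          _ ≤ ∑ v : V, ∑ u : V, G.m u v :=
              Finset.sum_le_sum_of_subset (Finset.subset_univ _)
      have hb4 : (∑ v ∈ A, o v) * C ^ (t v₀ - 1) < C * C ^ (t v₀ - 1) := by
        have hpos : 0 < C ^ (t v₀ - 1) := Nat.pow_pos (by omega)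
        have : ∑ v ∈ A, o v < C := by omega
        exact (Nat.mul_lt_mul_right hpos).mpr this
      have hb5 : C * C ^ (t v₀ - 1) = C ^ (t v₀) := by
        rw [← pow_succ']
        congr 1
        omega
      omega
    simp only [hφ]
    omega
  intro N
  induction N with
  | zero =>
    intro E hE
    by_cases hall : ∀ v, v ≠ q → 0 ≤ E v
    · exact ⟨E, G.equiv_refl E, hall⟩
    · exfalso
      push_neg at hall
      obtain ⟨v₀, hv₀q, hneg⟩ := hall
      obtain ⟨E', _, hlt⟩ := step E v₀ hv₀q (by omega)
      omega
  | succ N ih =>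
    intro E hE
    by_cases hall : ∀ v, v ≠ q → 0 ≤ E v
    · exact ⟨E, G.equiv_refl E, hall⟩
    · push_neg at hall
      obtain ⟨v₀, hv₀q, hneg⟩ := hall
      obtain ⟨E', hEq, hlt⟩ := step E v₀ hv₀q (by omega)
      obtain ⟨D', hEq', hD'⟩ := ih E' (by omega)
      exact ⟨D', G.equiv_trans hEq hEq', hD'⟩

end Multigraph


/-- Every divisor of degree `g(G)` on a finite connected loopless multigraph
`G` is equivalent to an effective divisor, where `g(G) = |E(G)| - |V(G)| + 1`. -/
theorem degree_genus_equivalent_effective {V : Type} [Fintype V] [DecidableEq V]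
    (G : Multigraph V) (hG : G.Connected) (D : V → ℤ)
    (hD : Divisor.deg D = G.genus) :
    ∃ F : V → ℤ, G.Equivalent D F ∧ Divisor.Effective F := by
  have hconn : G.toSimpleGraph.Connected := hG
  have : Nonempty V := hconn.nonempty
  obtain ⟨q⟩ := this
  obtain ⟨D₁, hE1, hoff⟩ := G.phase1 hG q D
  obtain ⟨w, hwq, hw0, hsup⟩ := G.exists_weight hG q
  obtain ⟨k, hk⟩ := exists_nat_ge (∑ v, (D₁ v : ℚ) * w v)
  have hdeg1 : Divisor.deg D₁ = G.genus := by rw [G.deg_of_equiv hE1, hD]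
  obtain ⟨F, hE2, hF⟩ := G.phase2 hG q w hwq hw0 hsup k D₁ hdeg1 hoff hk
  exact ⟨F, G.equiv_trans hE1 hE2, hF⟩
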